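/- arXiv:1511.05503 — 4 statements merged into one kernel-verified Lean document; each statement's English description precedes it below -/
import Mathlib

section
/- Let p be an odd prime and i an integer with 1 ≤ i ≤ p-3. Then ∑_{t=2}^{p-1} 1/(t^i(1-t)) ≡ -(i+1) (mod p), where the arithmetic is in ℤ/pℤ. -/
open Finset

lemma cast_Icc_sum (p : ℕ) [Fact p.Prime] (hp4 : 4 ≤ p) (f : ZMod p → ZMod p) :
    ∑ t ∈ Finset.Icc 2 (p-1), f (t : ZMod p)
      = ∑ x ∈ (Finset.univ \ {0, 1} : Finset (ZMod p)), f x := by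
  haveI : NeZero p := ⟨by omega⟩
  refine Finset.sum_nbij' (fun t => ((t : ZMod p))) (fun x => x.val) ?_ ?_ ?_ ?_ ?_
  · intro t ht
    simp only [mem_Icc] at ht
    have hlt : t < p := by omega
    have hv : (t : ZMod p).val = t := ZMod.val_natCast_of_lt hlt
    simp only [mem_sdiff, mem_univ, mem_insert, mem_singleton, true_and]
    push_neg
    constructor
    · intro h; rw [h, ZMod.val_zero] at hv; omega
    · intro h; rw [h, ZMod.val_one] at hv; omega
  · intro x hx
    simp only [mem_sdiff, mem_univ, mem_insert, mem_singleton, true_and] at hx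
    push_neg at hx
    have hxv : ((x.val : ℕ) : ZMod p) = x := by rw [ZMod.natCast_val, ZMod.cast_id]
    have h0 : x.val ≠ 0 := fun h => hx.1 (by rw [← hxv, h, Nat.cast_zero])
    have h1 : x.val ≠ 1 := fun h => hx.2 (by rw [← hxv, h, Nat.cast_one])
    have hlt := ZMod.val_lt x
    simp only [mem_Icc]; omega
  · intro t ht
    simp only [mem_Icc] at ht
    exact ZMod.val_natCast_of_lt (by omega)
  · intro x hx
    rw [ZMod.natCast_val, ZMod.cast_id]
  · intro t ht; rfl

lemma key_sum (p : ℕ) [hp : Fact p.Prime] (hp4 : 4 ≤ p) (k : ℕ) (hk1 : 1 ≤ k)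
    (hk2 : k ≤ p - 2) :
    ∑ t ∈ Finset.Icc 2 (p-1), ((t : ZMod p)⁻¹) ^ k = -1 := by
  rw [cast_Icc_sum p hp4 (fun x => (x⁻¹) ^ k)]
  have hbij : ∑ x ∈ (Finset.univ \ {0, 1} : Finset (ZMod p)), (x⁻¹) ^ k
      = ∑ x ∈ (Finset.univ \ {0, 1} : Finset (ZMod p)), x ^ k := by
    apply Finset.sum_nbij' (fun x => x⁻¹) (fun x => x⁻¹)
    · intro x hx
      simp only [mem_sdiff, mem_univ, mem_insert, mem_singleton, true_and] at hx ⊢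
      push_neg at hx ⊢
      exact ⟨inv_ne_zero hx.1, fun h => hx.2 (by rw [← inv_inv x, h, inv_one])⟩
    · intro x hx
      simp only [mem_sdiff, mem_univ, mem_insert, mem_singleton, true_and] at hx ⊢
      push_neg at hx ⊢
      exact ⟨inv_ne_zero hx.1, fun h => hx.2 (by rw [← inv_inv x, h, inv_one])⟩
    · intro x _; exact inv_inv x
    · intro x _; exact inv_inv x
    · intro x _; rfl
  rw [hbij]
  have hcard : Fintype.card (ZMod p) = p := ZMod.card p
  have htot : ∑ x : ZMod p, x ^ k = 0 := by
    apply FiniteField.sum_pow_lt_card_sub_one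
    rw [hcard]; omega
  have h01 : (0 : ZMod p) ≠ 1 := zero_ne_one
  have hsplit : ∑ x : ZMod p, x ^ k
      = ∑ x ∈ (Finset.univ \ {0, 1} : Finset (ZMod p)), x ^ k + ((0:ZMod p)^k + 1^k) := by
    rw [← Finset.sum_sdiff (Finset.subset_univ ({0,1} : Finset (ZMod p)))]
    congr 1
    rw [Finset.sum_insert (by simp [h01]), Finset.sum_singleton]
  rw [htot, zero_pow (by omega), one_pow, zero_add] at hsplit
  linear_combination -hsplit

lemma partial_frac {p : ℕ} [Fact p.Prime] (x : ZMod p) (hx : x ≠ 0) (hx1 : 1 - x ≠ 0)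
    (i : ℕ) : (x ^ i * (1 - x))⁻¹ = (∑ j ∈ Finset.range i, (x⁻¹) ^ (j+1)) + (1 - x)⁻¹ := by
  induction i with
  | zero => simp
  | succ n ih =>
    have hxn : x ^ n ≠ 0 := pow_ne_zero _ hx
    have key : x⁻¹ * (1 - x)⁻¹ = x⁻¹ + (1 - x)⁻¹ := by
      field_simp
      ring
    rw [pow_succ, mul_comm (x^n) x, mul_assoc, mul_inv, ih, mul_add, key,
      Finset.mul_sum, Finset.sum_range_succ']
    simp only [← pow_succ']
    ring

theorem sum_inv_pow_mul_one_sub (p : ℕ) (hp : p.Prime) (hodd : Odd p) (i : ℕ)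
    (hi1 : 1 ≤ i) (hi2 : i ≤ p - 3) :
    ∑ t ∈ Finset.Icc 2 (p - 1), ((t : ZMod p) ^ i * (1 - (t : ZMod p)))⁻¹ = -(i + 1) := by
  haveI : Fact p.Prime := ⟨hp⟩
  have hp4 : 4 ≤ p := by
    rcases hodd with ⟨m, hm⟩
    have := hp.two_le
    omega
  have hrw : ∀ t ∈ Finset.Icc 2 (p-1),
      ((t : ZMod p) ^ i * (1 - (t : ZMod p)))⁻¹
        = (∑ j ∈ Finset.range i, ((t : ZMod p)⁻¹) ^ (j+1)) + (1 - (t : ZMod p))⁻¹ := by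
    intro t ht
    simp only [Finset.mem_Icc] at ht
    have hv : (t : ZMod p).val = t := ZMod.val_natCast_of_lt (by omega)
    have hx : (t : ZMod p) ≠ 0 := by
      intro h; rw [h, ZMod.val_zero] at hv; omega
    have hx1 : 1 - (t : ZMod p) ≠ 0 := by
      intro h
      have : (t : ZMod p) = 1 := by linear_combination -h
      rw [this, ZMod.val_one] at hv; omega
    exact partial_frac _ hx hx1 i
  rw [Finset.sum_congr rfl hrw, Finset.sum_add_distrib, Finset.sum_comm]
  have h1 : ∑ j ∈ Finset.range i, ∑ t ∈ Finset.Icc 2 (p-1), ((t : ZMod p)⁻¹) ^ (j+1)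
      = -(i : ZMod p) := by
    rw [Finset.sum_congr rfl (fun j hj => key_sum p hp4 (j+1) (by omega)
      (by simp only [Finset.mem_range] at hj; omega))]
    simp
  have h2 : ∑ t ∈ Finset.Icc 2 (p-1), (1 - (t : ZMod p))⁻¹ = -1 := by
    have : ∑ t ∈ Finset.Icc 2 (p-1), (1 - (t : ZMod p))⁻¹
        = ∑ t ∈ Finset.Icc 2 (p-1), ((t : ZMod p)⁻¹) ^ 1 := by
      apply Finset.sum_nbij' (fun t => p + 1 - t) (fun t => p + 1 - t)
      · intro t ht; simp only [Finset.mem_Icc] at *; omega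
      · intro t ht; simp only [Finset.mem_Icc] at *; omega
      · intro t ht; simp only [Finset.mem_Icc] at ht; omega
      · intro t ht; simp only [Finset.mem_Icc] at ht; omega
      · intro t ht
        simp only [Finset.mem_Icc] at ht
        have hc : ((p + 1 - t : ℕ) : ZMod p) = 1 - (t : ZMod p) := by
          have : t ≤ p + 1 := by omega
          push_cast [Nat.cast_sub this]
          rw [ZMod.natCast_self]
          ring
        rw [hc, pow_one]
    rw [this]
    exact key_sum p hp4 1 le_rfl (by omega)
  rw [h1, h2]
  ring
end

section
/- Let p be an odd prime, i an integer with 1 ≤ i ≤ p-3, and m ∈ (ℤ/pℤ)^×. Then ∑_{k} (1/k^i)·(1/(m-k)) ≡ -(i+1)/m^{i+1} (mod p), where the sum is over all k ∈ (ℤ/pℤ)^× with k ≠ m. -/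
open Finset

lemma aux_inv_pow_sum_all (p : ℕ) [Fact p.Prime] (j : ℕ) (hj2 : j < p - 1) :
    ∑ x : ZMod p, (x ^ j)⁻¹ = 0 := by
  have h := FiniteField.sum_pow_lt_card_sub_one (ZMod p) j (by rwa [ZMod.card])
  calc ∑ x : ZMod p, (x ^ j)⁻¹ = ∑ x : ZMod p, (x⁻¹) ^ j := by simp [inv_pow]
    _ = ∑ x : ZMod p, x ^ j :=
        Fintype.sum_equiv (inv_involutive.toPerm _) _ _ (fun x => rfl)
    _ = 0 := h

lemma aux_inv_pow_sum (p : ℕ) [Fact p.Prime] (j : ℕ) (hj1 : 1 ≤ j) (hj2 : j < p - 1)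
    (m : ZMod p) (hm : m ≠ 0) :
    ∑ k ∈ univ.filter (fun k : ZMod p => k ≠ 0 ∧ k ≠ m), (k ^ j)⁻¹ = -(m ^ j)⁻¹ := by
  have h0 := aux_inv_pow_sum_all p j hj2
  have hsplit := Finset.sum_filter_add_sum_filter_not Finset.univ
    (fun k : ZMod p => k ≠ 0 ∧ k ≠ m) (fun k => (k ^ j)⁻¹)
  have hset : Finset.univ.filter (fun k : ZMod p => ¬(k ≠ 0 ∧ k ≠ m)) = {0, m} := by
    ext x
    simp only [mem_filter, mem_univ, true_and, mem_insert, mem_singleton, not_and_or, not_not]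
  rw [hset] at hsplit
  have h0m : (0 : ZMod p) ≠ m := fun h => hm h.symm
  rw [Finset.sum_pair h0m] at hsplit
  have hz : ((0 : ZMod p) ^ j)⁻¹ = 0 := by
    rw [zero_pow (by omega), inv_zero]
  rw [hz, zero_add, h0] at hsplit
  exact eq_neg_of_add_eq_zero_left hsplit

lemma aux_inv_sub_sum (p : ℕ) [Fact p.Prime] (hp : 2 < p) (m : ZMod p) (hm : m ≠ 0) :
    ∑ k ∈ univ.filter (fun k : ZMod p => k ≠ 0 ∧ k ≠ m), (m - k)⁻¹ = -m⁻¹ := by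
  have h1 := aux_inv_pow_sum p 1 le_rfl (by omega) m hm
  simp only [pow_one] at h1
  rw [← h1]
  apply Finset.sum_nbij' (fun k => m - k) (fun k => m - k)
  · intro a ha
    simp only [mem_filter, mem_univ, true_and] at ha ⊢
    exact ⟨sub_ne_zero.mpr (Ne.symm ha.2), fun h => ha.1 (sub_eq_self.mp h)⟩
  · intro a ha
    simp only [mem_filter, mem_univ, true_and] at ha ⊢
    exact ⟨sub_ne_zero.mpr (Ne.symm ha.2), fun h => ha.1 (sub_eq_self.mp h)⟩
  · intro a _; ring
  · intro a _; ring
  · intro a _; rfl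

lemma aux_key' (p : ℕ) [Fact p.Prime] (a b : ZMod p) (ha : a ≠ 0) (hb : b ≠ 0)
    (hab : a + b ≠ 0) (n : ℕ) :
    (a ^ (n + 1))⁻¹ * b⁻¹
      = (a + b)⁻¹ * (a ^ (n + 1))⁻¹ + (a + b)⁻¹ * ((a ^ n)⁻¹ * b⁻¹) := by
  have hstep : a⁻¹ * b⁻¹ = (a + b)⁻¹ * a⁻¹ + (a + b)⁻¹ * b⁻¹ := by
    field_simp
    ring
  rw [pow_succ, mul_inv]
  calc (a ^ n)⁻¹ * a⁻¹ * b⁻¹ = (a ^ n)⁻¹ * (a⁻¹ * b⁻¹) := by ring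
    _ = (a ^ n)⁻¹ * ((a + b)⁻¹ * a⁻¹ + (a + b)⁻¹ * b⁻¹) := by rw [hstep]
    _ = (a + b)⁻¹ * ((a ^ n)⁻¹ * a⁻¹) + (a + b)⁻¹ * ((a ^ n)⁻¹ * b⁻¹) := by ring

lemma aux_key (p : ℕ) [Fact p.Prime] (m k : ZMod p) (hm : m ≠ 0) (hk : k ≠ 0)
    (hkm : k ≠ m) (n : ℕ) :
    (k ^ (n + 1))⁻¹ * (m - k)⁻¹
      = m⁻¹ * (k ^ (n + 1))⁻¹ + m⁻¹ * ((k ^ n)⁻¹ * (m - k)⁻¹) := by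
  have h1 : m - k ≠ 0 := sub_ne_zero.mpr (Ne.symm hkm)
  have h2 : k + (m - k) ≠ 0 := by rwa [add_sub_cancel]
  have h := aux_key' p k (m - k) hk h1 h2 n
  rw [add_sub_cancel] at h
  exact h

theorem sum_inv_pow_mul_inv_sub (p : ℕ) [Fact p.Prime] (hodd : Odd p) (i : ℕ)
    (hi1 : 1 ≤ i) (hi2 : i ≤ p - 3) (m : ZMod p) (hm : m ≠ 0) :
    ∑ k ∈ Finset.univ.filter (fun k : ZMod p => k ≠ 0 ∧ k ≠ m),
      (k ^ i)⁻¹ * (m - k)⁻¹ = -(i + 1) / m ^ (i + 1) := by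
  have hp2 : 2 < p := by
    have h2 := (Fact.out : p.Prime).two_le
    have h3 := Nat.odd_iff.mp hodd
    omega
  induction i, hi1 using Nat.le_induction with
  | base =>
    rw [Finset.sum_congr rfl (fun k hk => by
      simp only [mem_filter, mem_univ, true_and] at hk
      exact aux_key p m k hm hk.1 hk.2 0)]
    rw [Finset.sum_add_distrib, ← Finset.mul_sum, ← Finset.mul_sum]
    have h1 := aux_inv_pow_sum p 1 le_rfl (by omega) m hm
    have h2 := aux_inv_sub_sum p hp2 m hm
    simp only [pow_zero, inv_one, one_mul]
    rw [h1, h2]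
    have hm2 : m ^ 2 ≠ 0 := pow_ne_zero _ hm
    push_cast
    field_simp
    ring
  | succ n hn ih =>
    have hsum := ih (by omega)
    rw [Finset.sum_congr rfl (fun k hk => by
      simp only [mem_filter, mem_univ, true_and] at hk
      exact aux_key p m k hm hk.1 hk.2 n)]
    rw [Finset.sum_add_distrib, ← Finset.mul_sum, ← Finset.mul_sum]
    rw [hsum, aux_inv_pow_sum p (n + 1) (by omega) (by omega) m hm]
    have hmp : m ^ (n + 1 + 1) ≠ 0 := pow_ne_zero _ hm
    have hmp2 : m ^ (n + 1) ≠ 0 := pow_ne_zero _ hm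
    push_cast
    rw [pow_succ, mul_inv]
    simp only [div_eq_mul_inv]
    ring
end

section
/- Let p be a prime, G a solvable transitive subgroup of the symmetric group S_p. Then G contains a unique subgroup of order p, and this subgroup is normal in G. -/
theorem solvable_transitive_unique_normal_p_subgroup (p : ℕ) (hp : p.Prime)
    (G : Subgroup (Equiv.Perm (Fin p))) (hsolv : IsSolvable G)
    (htrans : MulAction.IsPretransitive G (Fin p)) :
    (∃! P : Subgroup G, Nat.card P = p) ∧
      ∀ P : Subgroup G, Nat.card P = p → P.Normal := by
  classical
  haveI : Fact p.Prime := ⟨hp⟩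
  haveI := htrans
  have hp2 : 2 ≤ p := hp.two_le
  -- faithfulness
  have hfaith : ∀ g : G, (∀ x : Fin p, g • x = x) → g = 1 := by
    intro g hg
    ext x
    have h := hg x
    rw [Submonoid.smul_def, Equiv.Perm.smul_def] at h
    simp [h]
  -- nontriviality of G
  haveI : Nontrivial G := by
    obtain ⟨g, hg⟩ := htrans.exists_smul_eq (⟨0, by omega⟩ : Fin p) ⟨1, by omega⟩
    refine ⟨g, 1, fun h => ?_⟩
    rw [h, one_smul] at hg
    simp [Fin.ext_iff] at hg
  -- last nontrivial term of derived series
  have hex : ∃ n, derivedSeries G n = ⊥ := hsolv.solvable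
  set n := Nat.find hex with hn
  have hbot : derivedSeries G n = ⊥ := Nat.find_spec hex
  have hn0 : n ≠ 0 := by
    intro h
    rw [h] at hbot
    exact top_ne_bot hbot
  set N : Subgroup G := derivedSeries G (n - 1) with hN
  have hNbot : N ≠ ⊥ := Nat.find_min hex (by omega)
  haveI hNnormal : N.Normal := derivedSeries_normal _ _
  have hNcomm : ∀ a b : G, a ∈ N → b ∈ N → a * b = b * a := by
    intro a b ha hb
    have h1 : derivedSeries G (n - 1 + 1) = ⊥ := by
      rw [show n - 1 + 1 = n by omega]; exact hbot
    rw [derivedSeries_succ] at h1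
    open scoped commutatorElement in have h2 : ⁅a, b⁆ ∈ (⊥ : Subgroup G) := h1 ▸ Subgroup.commutator_mem_commutator ha hb
    rw [Subgroup.mem_bot] at h2
    exact commutatorElement_eq_one_iff_mul_comm.mp h2
  -- orbits of N are blocks, of size 1 or p
  have horb : ∀ a : Fin p, (MulAction.orbit N a).ncard = 1 ∨ (MulAction.orbit N a).ncard = p := by
    intro a
    have hB := MulAction.IsBlock.orbit_of_normal (N := N) a
    have hdvd := hB.ncard_dvd_card ⟨a, MulAction.mem_orbit_self a⟩
    rw [Nat.card_eq_fintype_card, Fintype.card_fin] at hdvd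
    exact hp.eq_one_or_self_of_dvd _ hdvd
  -- some orbit is large
  have hex2 : ∃ a : Fin p, (MulAction.orbit N a).ncard = p := by
    by_contra h
    push_neg at h
    have hall : ∀ a : Fin p, (MulAction.orbit N a).ncard = 1 :=
      fun a => (horb a).resolve_right (h a)
    apply hNbot
    rw [eq_bot_iff]
    intro g hg
    rw [Subgroup.mem_bot]
    apply hfaith g
    intro x
    obtain ⟨b, hb⟩ := Set.ncard_eq_one.mp (hall x)
    have h1 : (⟨g, hg⟩ : N) • x ∈ MulAction.orbit N x := MulAction.mem_orbit _ _
    have h2 : x ∈ MulAction.orbit N x := MulAction.mem_orbit_self x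
    rw [hb, Set.mem_singleton_iff] at h1 h2
    have h3 : (⟨g, hg⟩ : N) • x = x := by rw [h1, h2]
    simpa [Submonoid.smul_def] using h3
  obtain ⟨a, ha⟩ := hex2
  -- that orbit is everything
  have horb_univ : MulAction.orbit N a = Set.univ := by
    apply Set.eq_of_subset_of_ncard_le (Set.subset_univ _)
    rw [ha, Set.ncard_univ, Nat.card_eq_fintype_card, Fintype.card_fin]
  -- the stabilizer in N is trivial
  have hstab : MulAction.stabilizer N a = ⊥ := by
    rw [eq_bot_iff]
    intro g hg
    rw [Subgroup.mem_bot]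
    rw [MulAction.mem_stabilizer_iff] at hg
    have hfix : ∀ x : Fin p, g • x = x := by
      intro x
      have hx : x ∈ MulAction.orbit N a := by rw [horb_univ]; trivial
      obtain ⟨m, hm⟩ := hx
      have hm' : m • a = x := hm
      have hc : g * m = m * g := by
        apply Subtype.ext
        exact hNcomm _ _ g.2 m.2
      calc g • x = g • m • a := by rw [hm']
        _ = (g * m) • a := (mul_smul _ _ _).symm
        _ = (m * g) • a := by rw [hc]
        _ = m • g • a := mul_smul _ _ _
        _ = m • a := by rw [hg]
        _ = x := hm'
    have : (g : G) = 1 := by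
      apply hfaith
      intro x
      have := hfix x
      exact this
    exact Subtype.ext this
  -- N has cardinality p
  have hcardN : Nat.card N = p := by
    have e1 : MulAction.orbit N a ≃ N ⧸ MulAction.stabilizer N a :=
      MulAction.orbitEquivQuotientStabilizer N a
    have e2 : N ⧸ MulAction.stabilizer N a ≃ N ⧸ (⊥ : Subgroup N) := by rw [hstab]
    have e3 : N ⧸ (⊥ : Subgroup N) ≃ N := (QuotientGroup.quotientBot (G := N)).toEquiv
    have : Nat.card (MulAction.orbit N a) = Nat.card N :=
      Nat.card_congr ((e1.trans e2).trans e3)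
    rw [← this, Nat.card_coe_set_eq, ha]
  -- p-adic valuation of |G| is 1
  haveI : Finite G := inferInstance
  have hG0 : Nat.card G ≠ 0 := Nat.card_pos.ne'
  have hfact : (Nat.card G).factorization p = 1 := by
    have h1 : p ∣ Nat.card G := by
      have h0 := Subgroup.card_subgroup_dvd_card N
      rwa [hcardN] at h0
    have h2 : ¬ p ^ 2 ∣ Nat.card G := by
      intro h
      have hdvdG : Nat.card G ∣ Nat.card (Equiv.Perm (Fin p)) :=
        Subgroup.card_subgroup_dvd_card G
      have h3 : p ^ 2 ∣ p.factorial := by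
        have := h.trans hdvdG
        rwa [Nat.card_eq_fintype_card, Fintype.card_perm, Fintype.card_fin] at this
      have hp1 : p.factorial = p * (p - 1).factorial :=
        (Nat.mul_factorial_pred (show p ≠ 0 by omega)).symm
      rw [hp1, pow_two] at h3
      have h5 : p ∣ (p - 1).factorial := (mul_dvd_mul_iff_left (by omega : (p : ℕ) ≠ 0)).mp h3
      have := (Nat.Prime.dvd_factorial hp).mp h5
      omega
    have hle : 1 ≤ (Nat.card G).factorization p := by
      rw [← hp.pow_dvd_iff_le_factorization hG0, pow_one]
      exact h1
    have hlt : ¬ 2 ≤ (Nat.card G).factorization p := by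
      rw [← hp.pow_dvd_iff_le_factorization hG0]
      exact h2
    omega
  -- every subgroup of order p equals N
  have key : ∀ P : Subgroup G, Nat.card P = p → P = N := by
    intro P hP
    have hP' : Nat.card P = p ^ (Nat.card G).factorization p := by
      rw [hfact, pow_one, hP]
    have hN' : Nat.card N = p ^ (Nat.card G).factorization p := by
      rw [hfact, pow_one, hcardN]
    let SP := Sylow.ofCard P hP'
    let SN := Sylow.ofCard N hN'
    haveI : (SN : Subgroup G).Normal := hNnormal
    obtain ⟨g, hg⟩ := MulAction.exists_smul_eq (M := G) SN SP
    have h1 : g • SN = SN := Sylow.smul_eq_of_normal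
    have h2 : SP = SN := by rw [← hg, h1]
    have : (SP : Subgroup G) = (SN : Subgroup G) := by rw [h2]
    simpa [SP, SN] using this
  refine ⟨⟨N, hcardN, fun P hP => key P hP⟩, fun P hP => ?_⟩
  rw [key P hP]
  exact hNnormal
end

section
/- Let p be a prime, G a solvable transitive subgroup of S_p, and P its unique subgroup of order p. Then the quotient N_G(P)/P embeds into a cyclic group of order p-1; in particular G/P is cyclic of order dividing p-1. -/
/-- `MulAut` of `Multiplicative A` is `AddAut A`. -/
def mulAutMultiplicativeEquiv (A : Type*) [AddGroup A] :
    MulAut (Multiplicative A) ≃* Multiplicative (AddAut A) where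
  toFun e := Multiplicative.ofAdd (MulEquiv.toAdditive e)
  invFun e := MulEquiv.toAdditive.symm (Multiplicative.toAdd e)
  left_inv _ := rfl
  right_inv _ := rfl
  map_mul' _ _ := rfl

theorem solvable_transitive_quotient_cyclic (p : ℕ) [Fact p.Prime]
    (G : Subgroup (Equiv.Perm (Fin p))) (hsolv : IsSolvable G)
    (htrans : MulAction.IsPretransitive G (Fin p))
    (P : Subgroup G) [hP : P.Normal] (hcard : Nat.card P = p) :
    (∃ f : G ⧸ P →* (ZMod p)ˣ, Function.Injective f) ∧
      IsCyclic (G ⧸ P) ∧ Nat.card (G ⧸ P) ∣ (p - 1) := by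
  classical
  have hp : p.Prime := Fact.out
  have hPcyc : IsCyclic P := isCyclic_of_prime_card hcard
  obtain ⟨σ, hσ⟩ := hPcyc.exists_generator
  have hσord : orderOf σ = p := by
    have := orderOf_eq_card_of_forall_mem_zpowers hσ
    rwa [hcard] at this
  have hσG : orderOf (σ : G) = p :=
    (orderOf_injective P.subtype P.subtype_injective σ).trans hσord
  have hσS : orderOf ((σ : G) : Equiv.Perm (Fin p)) = p :=
    (orderOf_injective G.subtype G.subtype_injective (σ : G)).trans hσG
  have hcycle : (((σ : G) : Equiv.Perm (Fin p))).IsCycle :=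
    Equiv.Perm.isCycle_of_prime_order'' (by simpa using hp) (by simpa using hσS)
  have hsupp : (((σ : G) : Equiv.Perm (Fin p))).support = Finset.univ := by
    apply Finset.eq_univ_of_card
    have := hcycle.orderOf
    rw [hσS] at this
    simp [← this]
  have key : (MulAut.conjNormal : G →* MulAut P).ker = P := by
    apply le_antisymm
    · intro g hg
      rw [MonoidHom.mem_ker] at hg
      have hGconj : (g : G) * (σ : G) * (g : G)⁻¹ = (σ : G) := by
        have h1 : MulAut.conjNormal (g : G) σ = σ := by rw [hg]; rfl
        calc (g : G) * (σ : G) * (g : G)⁻¹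
            = ((MulAut.conjNormal (g : G) σ : P) : G) :=
              (MulAut.conjNormal_apply (g : G) σ).symm
          _ = (σ : G) := by rw [h1]
      have hcomm : Commute ((g : G) : Equiv.Perm (Fin p))
          (((σ : G) : Equiv.Perm (Fin p))) := by
        have h2 := congrArg (fun x : G => (x : Equiv.Perm (Fin p))) hGconj
        push_cast at h2
        exact mul_inv_eq_iff_eq_mul.mp h2
      rw [hcycle.commute_iff] at hcomm
      obtain ⟨hc', hmem⟩ := hcomm
      have heq : Equiv.Perm.ofSubtype
            (((g : G) : Equiv.Perm (Fin p)).subtypePerm hc')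
          = ((g : G) : Equiv.Perm (Fin p)) := by
        apply Equiv.Perm.ofSubtype_subtypePerm
        intro x _
        rw [hsupp]; exact Finset.mem_univ x
      rw [heq] at hmem
      obtain ⟨k, hk⟩ := hmem
      have hgG : (g : G) = ((σ : G)) ^ k := by
        apply Subtype.ext
        simpa using hk.symm
      rw [hgG]
      exact_mod_cast P.zpow_mem σ.2 k
    · intro g hg
      rw [MonoidHom.mem_ker]
      refine MulEquiv.ext fun x => ?_
      obtain ⟨m, hm⟩ := hσ ⟨g, hg⟩
      obtain ⟨n, hn⟩ := hσ x
      have hcomm : (⟨g, hg⟩ : P) * x = x * ⟨g, hg⟩ := by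
        rw [← hm, ← hn]
        exact (Commute.zpow_zpow_self σ m n)
      have h := congrArg (Subtype.val) hcomm
      simp only [Subgroup.coe_mul] at h
      have hval : g * (x : G) * g⁻¹ = (x : G) := by
        rw [h, mul_assoc, mul_inv_cancel, mul_one]
      apply Subtype.ext
      rw [MulAut.conjNormal_apply]
      simpa using hval
  -- the isomorphism MulAut P ≃* (ZMod p)ˣ
  have : NeZero p := ⟨hp.ne_zero⟩
  have hcardZ : Nat.card (Multiplicative (ZMod p)) = p := by
    simp [Nat.card_eq_fintype_card]
  let eP : (↥P) ≃* Multiplicative (ZMod p) := mulEquivOfPrimeCardEq hcard hcardZ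
  let e : MulAut (↥P) ≃* (ZMod p)ˣ :=
    (MulAut.congr eP).trans ((mulAutMultiplicativeEquiv (ZMod p)).trans
      (ZMod.AddAutEquivUnits p).toMultiplicative)
  set f₀ : G →* MulAut P := MulAut.conjNormal with hf₀
  let f : G ⧸ P →* (ZMod p)ˣ :=
    (e.toMonoidHom.comp (QuotientGroup.kerLift f₀)).comp
      (QuotientGroup.quotientMulEquivOfEq key.symm).toMonoidHom
  have hf : Function.Injective f := by
    have hco : ⇑f = ⇑e ∘ ⇑(QuotientGroup.kerLift f₀) ∘
        ⇑(QuotientGroup.quotientMulEquivOfEq key.symm) := rfl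
    rw [hco]
    exact e.injective.comp ((QuotientGroup.kerLift_injective f₀).comp
      (QuotientGroup.quotientMulEquivOfEq key.symm).injective)
  have hcyc : IsCyclic (G ⧸ P) := by
    have hr : IsCyclic f.range := Subgroup.isCyclic f.range
    exact isCyclic_of_surjective (MonoidHom.ofInjective hf).symm
      (MonoidHom.ofInjective hf).symm.surjective
  refine ⟨⟨f, hf⟩, hcyc, ?_⟩
  have hdvd := Subgroup.card_dvd_of_injective f hf
  rwa [Nat.card_units, Nat.card_zmod] at hdvd
end
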